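/- Let (X,T) be a topological dynamical system with h_top(T) = log K, and assume there exists a continuous injective equivariant map ψ : X → {1,…,K}^ℤ. Then ψ is surjective, hence a topological conjugacy between (X,T) and the K-full shift. -/

import Mathlib

open MeasureTheory Filter Topology Set
open scoped ENNReal NNReal Classical

noncomputable section

namespace Krieger

/-- The shift map `σ` on bi-infinite sequences: `(σ x) i = x (i+1)`. -/
def shift {Λ : Type*} (x : ℤ → Λ) : ℤ → Λ := fun i => x (i + 1)

/-- `Per_n(X,T)` : the set of periodic points of least period `n`. -/
def leastPer {X : Type*} (T : X → X) (n : ℕ) : Set X :=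
  {x | Function.minimalPeriod T x = n}

/-- The set `M(X,T)` of `T`-invariant Borel probability measures. -/
def invProb {X : Type*} [MeasurableSpace X] (T : X → X) : Set (ProbabilityMeasure X) :=
  {μ | ∀ s : Set X, MeasurableSet s → μ.toMeasure (T ⁻¹' s) = μ.toMeasure s}

/-- Pushforward of a probability measure under a map (junk value if not a.e. measurable). -/
def pushPM {X Y : Type*} [MeasurableSpace X] [MeasurableSpace Y] (ψ : X → Y)
    (μ : ProbabilityMeasure X) : ProbabilityMeasure Y :=
  if h : AEMeasurable ψ μ.toMeasure then ⟨μ.toMeasure.map ψ, Measure.isProbabilityMeasure_map h⟩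
  else ⟨Measure.dirac (ψ μ.nonempty.some), inferInstance⟩

/-- The induced map `ψ* : M(X,T) → M(Y)` on invariant probability measures, viewed as a
map into the ambient space of probability measures on `Y`. -/
def inducedMap {X Y : Type*} [MeasurableSpace X] [MeasurableSpace Y] (T : X → X) (ψ : X → Y) :
    ↥(invProb T) → ProbabilityMeasure Y :=
  fun μ => pushPM ψ (μ : ProbabilityMeasure X)

/-- A finite open cover of the whole space. -/
def IsOpenCover {X : Type*} [TopologicalSpace X] (U : Finset (Set X)) : Prop :=
  (∀ A ∈ U, IsOpen A) ∧ ⋃₀ (U : Set (Set X)) = univ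

/-- The join `U ∨ V` of two finite families of sets. -/
def joinC {X : Type*} (U V : Finset (Set X)) : Finset (Set X) :=
  (U ×ˢ V).image fun p => p.1 ∩ p.2

/-- The dynamical join `U^n = ⋁_{i=0}^{n-1} T^{-i} U`. -/
def dynCover {X : Type*} (T : X → X) (U : Finset (Set X)) : ℕ → Finset (Set X)
  | 0 => {univ}
  | n + 1 => joinC (dynCover T U n) (U.image fun A => T^[n] ⁻¹' A)

/-- Minimal cardinality of a subfamily of `V` covering the set `W`. -/
def coverCard {X : Type*} (V : Finset (Set X)) (W : Set X) : ℕ :=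
  sInf {m | ∃ F : Finset (Set X), F ⊆ V ∧ W ⊆ ⋃₀ (F : Set (Set X)) ∧ F.card = m}

/-- The topological conditional entropy `h(V|U)` of the cover `V` given the cover `U`. -/
def condEnt {X : Type*} (T : X → X) (V U : Finset (Set X)) : ℝ :=
  limsup (fun n : ℕ =>
    (⨆ W ∈ dynCover T U n, Real.log (coverCard (dynCover T V n) W)) / n) atTop

/-- `per(T|U)` : exponential growth rate of periodic orbits seen at the scale of `U`. -/
def perEnt {X : Type*} (T : X → X) (U : Finset (Set X)) : ℝ :=
  limsup (fun n : ℕ =>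
    (⨆ W ∈ dynCover T U n, Real.log (Nat.card ↥(leastPer T n ∩ W))) / n) atTop

/-- Asymptotic h-expansiveness: `inf_U sup_V h(V|U) = 0`. -/
def AsympHExpansive {X : Type*} [TopologicalSpace X] (T : X → X) : Prop :=
  ∀ ε > (0:ℝ), ∃ U : Finset (Set X), IsOpenCover U ∧
    ∀ V : Finset (Set X), IsOpenCover V → condEnt T V U < ε

/-- Asymptotic per-expansiveness: `inf_U per(T|U) = 0`. -/
def AsympPerExpansive {X : Type*} [TopologicalSpace X] (T : X → X) : Prop :=
  ∀ ε > (0:ℝ), ∃ U : Finset (Set X), IsOpenCover U ∧ perEnt T U < ε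

/-- Asymptotic expansiveness: both asymptotic h- and per-expansiveness. -/
def AsympExpansive {X : Type*} [TopologicalSpace X] (T : X → X) : Prop :=
  AsympHExpansive T ∧ AsympPerExpansive T

/-- A finite measurable partition of the space. -/
def IsMeasPartition {X : Type*} [MeasurableSpace X] (P : Finset (Set X)) : Prop :=
  (∀ A ∈ P, MeasurableSet A) ∧ ⋃₀ (P : Set (Set X)) = univ ∧
    ∀ A ∈ P, ∀ B ∈ P, A ≠ B → A ∩ B = ∅

/-- A finite clopen partition of the space. -/
def IsClopenPartition {X : Type*} [TopologicalSpace X] (P : Finset (Set X)) : Prop :=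
  (∀ A ∈ P, IsClopen A) ∧ ⋃₀ (P : Set (Set X)) = univ ∧
    ∀ A ∈ P, ∀ B ∈ P, A ≠ B → A ∩ B = ∅

/-- Shannon entropy `H_μ(P)` of a finite family of sets. -/
def entH {X : Type*} [MeasurableSpace X] (μ : Measure X) (P : Finset (Set X)) : ℝ :=
  ∑ A ∈ P, Real.negMulLog (μ A).toReal

/-- Dynamical entropy `h_μ(T,P) = lim_n (1/n) H_μ(⋁_{i<n} T^{-i}P)` of a partition. -/
def entPart {X : Type*} [MeasurableSpace X] (T : X → X) (μ : Measure X)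
    (P : Finset (Set X)) : ℝ :=
  limsup (fun n : ℕ => entH μ (dynCover T P n) / n) atTop

/-- Kolmogorov–Sinai entropy `h_μ(T)`. -/
def ksEntropy {X : Type*} [MeasurableSpace X] (T : X → X) (μ : Measure X) : ℝ :=
  ⨆ P : {P : Finset (Set X) // IsMeasPartition P}, entPart T μ P.1

/-- A set is null when it is negligible for every invariant ergodic probability measure. -/
def IsNullSet {X : Type*} [MeasurableSpace X] (T : X → X) (A : Set X) : Prop :=
  ∀ μ : Measure X, IsProbabilityMeasure μ → Ergodic T μ → μ A = 0

/-- A set is full when it has full measure for every invariant ergodic probability measure. -/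
def IsFullSet {X : Type*} [MeasurableSpace X] (T : X → X) (A : Set X) : Prop :=
  ∀ μ : Measure X, IsProbabilityMeasure μ → Ergodic T μ → μ A = 1

/-- The small boundary property : finite partitions with small boundaries and arbitrarily
small diameters. -/
def SBP {X : Type*} [MetricSpace X] [MeasurableSpace X] (T : X → X) : Prop :=
  ∀ ε > (0:ℝ), ∃ P : Finset (Set X),
    (⋃₀ (P : Set (Set X)) = univ) ∧
    (∀ A ∈ P, ∀ B ∈ P, A ≠ B → A ∩ B = ∅) ∧
    (∀ A ∈ P, IsNullSet T (frontier A)) ∧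
    (∀ A ∈ P, Metric.diam A < ε)

/-- A Borel map into a zero-dimensional space is essentially continuous when preimages of a
basis of clopen sets have small boundaries. -/
def EssCont {X Y : Type*} [TopologicalSpace X] [MeasurableSpace X] [TopologicalSpace Y]
    (T : X → X) (ψ : X → Y) : Prop :=
  ∃ B : Set (Set Y), TopologicalSpace.IsTopologicalBasis B ∧ (∀ s ∈ B, IsClopen s) ∧
    ∀ s ∈ B, IsNullSet T (frontier (ψ ⁻¹' s))

/-- An `ε`-injective map between metric spaces. -/
def EpsInjective {X Y : Type*} [MetricSpace X] [MetricSpace Y] (φ : X → Y) (ε : ℝ) : Prop :=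
  ∃ δ > (0:ℝ), ∀ Z : Set Y, Metric.diam Z < δ → Metric.diam (φ ⁻¹' Z) < ε

/-- The Cantor metric on the shift space : `d(x,y) = 2^{-min{ i ≥ 0 : x_i ≠ y_i or x_{-i} ≠ y_{-i}}}`. -/
def cantorDist {Λ : Type*} (x y : ℤ → Λ) : ℝ :=
  if x = y then 0
  else (2:ℝ)⁻¹ ^ sInf {n : ℕ | x (n:ℤ) ≠ y (n:ℤ) ∨ x (-(n:ℤ)) ≠ y (-(n:ℤ))}

/-- Diameter of a subset of the shift space for the Cantor metric. -/
def cDiam {Λ : Type*} (Z : Set (ℤ → Λ)) : ℝ :=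
  ⨆ p : Z × Z, cantorDist (p.1 : ℤ → Λ) (p.2 : ℤ → Λ)

/-- An `ε`-injective map into the shift space (with its Cantor metric). -/
def EpsInjShift {X Λ : Type*} [MetricSpace X] (φ : X → (ℤ → Λ)) (ε : ℝ) : Prop :=
  ∃ δ > (0:ℝ), ∀ Z : Set (ℤ → Λ), cDiam Z < δ → Metric.diam (φ ⁻¹' Z) < ε

/-- The pseudometric `d_N` on the shift space. -/
def dN {Λ : Type*} (N : ℕ) (x y : ℤ → Λ) : ℝ :=
  ⨆ n : {m : ℕ // N ≤ m},
    (Nat.card ↥{i : ℤ | i.natAbs ≤ (n:ℕ) ∧ x i ≠ y i} : ℝ) / (2 * (n:ℕ) + 1)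

/-- The Besicovitch pseudometric `d_∞ = lim_N d_N` on the shift space. -/
def dB {Λ : Type*} (x y : ℤ → Λ) : ℝ := ⨅ N : ℕ, dN N x y

/-- Cylinder sets on the coordinates `0, …, N-1`. -/
def cylinders (Λ : Type*) : Set (Set (ℤ → Λ)) :=
  {C | ∃ (N : ℕ) (w : ℕ → Λ), C = {y : ℤ → Λ | ∀ i : ℕ, i < N → y (i:ℤ) = w i}}

/-- An enumeration of the cylinder sets. -/
def IsCylEnum {Λ : Type*} (A : ℕ → Set (ℤ → Λ)) : Prop :=
  (∀ n, A n ∈ cylinders Λ) ∧ ∀ C ∈ cylinders Λ, ∃ n, A n = C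

/-- The metric `d_*` on probability measures associated to an enumeration of cylinders. -/
def dStar {Λ : Type*} [MeasurableSpace Λ] (A : ℕ → Set (ℤ → Λ))
    (μ ν : ProbabilityMeasure (ℤ → Λ)) : ℝ :=
  ∑' n : ℕ, |((μ (A n) : ℝ≥0) : ℝ) - ((ν (A n) : ℝ≥0) : ℝ)| / 2 ^ n

/-- The Hausdorff distance `d_H` associated to `d_*`. -/
def dHaus {Λ : Type*} [MeasurableSpace Λ] (A : ℕ → Set (ℤ → Λ))
    (S₁ S₂ : Set (ProbabilityMeasure (ℤ → Λ))) : ℝ :=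
  max (⨆ μ ∈ S₁, ⨅ ν ∈ S₂, dStar A μ ν) (⨆ ν ∈ S₂, ⨅ μ ∈ S₁, dStar A μ ν)

/-- The `n`-th empirical measure `(1/n) ∑_{k<n} δ_{T^k x}` (at time `n+1` so that it is
a probability measure). -/
def empMeas {X : Type*} [MeasurableSpace X] (T : X → X) (x : X) (n : ℕ) : Measure X :=
  (((n:ℝ≥0∞))⁻¹) • ∑ k ∈ Finset.range n, Measure.dirac (T^[k] x)

lemma empMeas_isProb {X : Type*} [MeasurableSpace X] (T : X → X) (x : X) (n : ℕ)
    (hn : n ≠ 0) : IsProbabilityMeasure (empMeas T x n) := by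
  constructor
  simp only [empMeas, Measure.smul_apply, Measure.coe_finset_sum, Finset.sum_apply,
    Measure.dirac_apply' _ MeasurableSet.univ, smul_eq_mul]
  simp only [Set.indicator_univ, Pi.one_apply, Finset.sum_const, Finset.card_range,
    nsmul_eq_mul, mul_one]
  exact ENNReal.inv_mul_cancel (by exact_mod_cast hn) (by simp)

/-- The empirical measures as probability measures. -/
def empPM {X : Type*} [MeasurableSpace X] (T : X → X) (x : X) (n : ℕ) :
    ProbabilityMeasure X :=
  ⟨empMeas T x (n + 1), empMeas_isProb T x (n + 1) (Nat.succ_ne_zero n)⟩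

/-- `φ(x)` : the set of accumulation points of the sequence of empirical measures at `x`. -/
def empCluster {X : Type*} [MeasurableSpace X] [TopologicalSpace X] [OpensMeasurableSpace X]
    (T : X → X) (x : X) : Set (ProbabilityMeasure X) :=
  {μ | MapClusterPt μ atTop (fun n : ℕ => empPM T x n)}

/-- A topological extension : a continuous surjective equivariant map. -/
def IsTopExtension {Y X : Type*} [TopologicalSpace Y] [TopologicalSpace X]
    (π : Y → X) (S : Y → Y) (T : X → X) : Prop :=
  Continuous π ∧ Function.Surjective π ∧ ∀ y, π (S y) = T (π y)

/-- A principal extension : entropies of invariant measures are preserved. -/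
def IsPrincipalExt {Y X : Type*} [MeasurableSpace Y] [MeasurableSpace X]
    (π : Y → X) (S : Y → Y) (T : X → X) : Prop :=
  ∀ ν : Measure Y, IsProbabilityMeasure ν →
    (∀ s : Set Y, MeasurableSet s → ν (S ⁻¹' s) = ν s) →
    ksEntropy S ν = ksEntropy T (ν.map π)

/-- A faithful extension : the induced map on invariant measures is a homeomorphism
onto `M(X,T)`. -/
def IsFaithfulExt {Y X : Type*} [MeasurableSpace Y] [MeasurableSpace X]
    [TopologicalSpace Y] [TopologicalSpace X] [OpensMeasurableSpace Y] [OpensMeasurableSpace X]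
    (π : Y → X) (S : Y → Y) (T : X → X) : Prop :=
  IsEmbedding (inducedMap S π) ∧ range (inducedMap S π) = invProb T

/-- A strongly faithful extension : faithful, and periodic points of least period `n`
are mapped onto each other. -/
def IsStronglyFaithfulExt {Y X : Type*} [MeasurableSpace Y] [MeasurableSpace X]
    [TopologicalSpace Y] [TopologicalSpace X] [OpensMeasurableSpace Y] [OpensMeasurableSpace X]
    (π : Y → X) (S : Y → Y) (T : X → X) : Prop :=
  IsFaithfulExt π S T ∧ ∀ n : ℕ, 1 ≤ n → π '' leastPer S n = leastPer T n

/-- Zero-dimensionality : a basis of clopen sets. -/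
def ZeroDim (X : Type*) [TopologicalSpace X] : Prop :=
  ∃ B : Set (Set X), TopologicalSpace.IsTopologicalBasis B ∧ ∀ s ∈ B, IsClopen s

end Krieger

open Krieger

section S17aux
open Uniformity Dynamics

namespace S17

variable {K : ℕ}

lemma shift_iterate (x : ℤ → Fin K) (k : ℕ) (j : ℤ) : (shift^[k] x) j = x (j + k) := by
  induction k generalizing x with
  | zero => simp
  | succ k ih =>
    rw [Function.iterate_succ_apply, ih (shift x)]
    show x (j + k + 1) = x (j + (k + 1))
    congr 1
    ring

def VM (K M : ℕ) : Set ((ℤ → Fin K) × (ℤ → Fin K)) :=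
  {p | ∀ i : ℤ, i.natAbs ≤ M → p.1 i = p.2 i}

lemma VM_symm (M : ℕ) : SetRel.IsSymm (VM K M) := by
  exact ⟨fun a b h i hi => (h i hi).symm⟩

lemma VM_comp (M : ℕ) : SetRel.comp (VM K M) (VM K M) = VM K M := by
  ext p
  constructor
  · rintro ⟨w, hw1, hw2⟩ i hi
    exact (hw1 i hi).trans (hw2 i hi)
  · intro h
    exact ⟨p.1, fun i _ => rfl, h⟩

lemma ball_VM {x z : ℤ → Fin K} {M n : ℕ}
    (h : ∀ j : ℤ, -(M:ℤ) ≤ j → j ≤ (n:ℤ) - 1 + M → x j = z j) :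
    z ∈ UniformSpace.ball x (dynEntourage shift (VM K M) n) := by
  rw [mem_ball_dynEntourage]
  intro k hk
  show ∀ i : ℤ, i.natAbs ≤ M → (shift^[k] x) i = (shift^[k] z) i
  intro i hi
  rw [shift_iterate, shift_iterate]
  exact h (i + k) (by omega) (by omega)

lemma cover_exists (hK : 2 ≤ K) (F : Set (ℤ → Fin K)) (L : ℕ) (y : ℤ → Fin K)
    (hP : ∀ x ∈ F, ∀ m : ℤ, ∃ i : ℤ, i.natAbs ≤ (L:ℤ) ∧ x (m + i) ≠ y i)
    (M n : ℕ) :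
    ∃ s : Finset (ℤ → Fin K), IsDynCoverOf shift F (VM K M) n ↑s ∧
      s.card ≤ (K ^ (2*L+1) - 1) ^ ((n + 2*M) / (2*L+1)) * K ^ (2*L+1) := by
  have hY : Nonempty (ℤ → Fin K) := ⟨fun _ => ⟨0, by omega⟩⟩
  set ℓ := 2*L+1 with hℓ
  have hℓpos : 0 < ℓ := by omega
  set N := n + 2*M with hN
  set q := N / ℓ with hq
  set b : Fin ℓ → Fin K := fun t => y ((t:ℤ) - L) with hb
  set e : (ℤ → Fin K) → (Fin q → Fin ℓ → Fin K) × (Fin ℓ → Fin K) :=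
    fun z => (fun j t => z (-(M:ℤ) + ((j : ℕ) * ℓ + (t : ℕ) : ℕ)),
              fun t => z (-(M:ℤ) + (q * ℓ + (t : ℕ) : ℕ))) with he
  have hblock : ∀ z ∈ F, ∀ j : Fin q, (e z).1 j ≠ b := by
    intro z hz j hEq
    obtain ⟨i, hi, hne⟩ := hP z hz (-(M:ℤ) + (j:ℕ) * ℓ + L)
    have hiL : 0 ≤ i + (L:ℤ) := by omega
    have htl : (i + (L:ℤ)).toNat < ℓ := by omega
    have h1 := congrFun hEq ⟨(i + (L:ℤ)).toNat, htl⟩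
    apply hne
    calc z (-(M:ℤ) + (j:ℕ) * ℓ + L + i)
        = z (-(M:ℤ) + (((j:ℕ) * ℓ + (i + (L:ℤ)).toNat : ℕ) : ℤ)) := by
          congr 1; push_cast; omega
      _ = y ((((i + (L:ℤ)).toNat : ℕ) : ℤ) - L) := h1
      _ = y i := by congr 1; omega
  -- the choice map
  set u : ((Fin q → Fin ℓ → Fin K) × (Fin ℓ → Fin K)) → (ℤ → Fin K) :=
    fun γ => if h : ∃ z ∈ F, e z = γ then h.choose else Classical.arbitrary _ with hu
  -- the index type
  set s : Finset (ℤ → Fin K) :=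
    Finset.image (fun γ : (Fin q → {v : Fin ℓ → Fin K // v ≠ b}) × (Fin ℓ → Fin K) =>
      u ((fun j => (γ.1 j : Fin ℓ → Fin K)), γ.2)) Finset.univ with hs
  refine ⟨s, ?_, ?_⟩
  · -- cover property
    intro z hz
    have hex : ∃ z' ∈ F, e z' = e z := ⟨z, hz, rfl⟩
    set x := u (e z) with hx
    have hxF : x ∈ F := by
      rw [hx, hu]; simp only [dif_pos hex]; exact hex.choose_spec.1
    have hxe : e x = e z := by
      rw [hx, hu]; simp only [dif_pos hex]; exact hex.choose_spec.2
    have hxs : x ∈ (s : Set (ℤ → Fin K)) := by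
      rw [hs]
      simp only [Finset.coe_image, Finset.coe_univ, Set.image_univ, Set.mem_range]
      refine ⟨(fun j => ⟨(e z).1 j, hblock z hz j⟩, (e z).2), ?_⟩
      rw [hx]
    refine ⟨x, hxs, ?_⟩
    apply ball_VM
    intro j hj1 hj2
    symm
    have ha : ((j + M).toNat : ℤ) = j + M := Int.toNat_of_nonneg (by omega)
    set a := (j + M).toNat with hadef
    have haN : a < N := by omega
    have hup : N < q * ℓ + ℓ := by rw [hq]; exact Nat.lt_div_mul_add hℓpos
    rcases lt_or_ge a (q * ℓ) with hlt | hge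
    · have hj0 : a / ℓ < q := Nat.div_lt_of_lt_mul (by rwa [mul_comm] at hlt)
      have ht : a % ℓ < ℓ := Nat.mod_lt _ hℓpos
      have hnat2 : a / ℓ * ℓ + a % ℓ = a := Nat.div_add_mod' a ℓ
      have h1 := congrFun (congrFun (congrArg Prod.fst hxe) ⟨a / ℓ, hj0⟩) ⟨a % ℓ, ht⟩
      calc x j = x (-(M:ℤ) + (a / ℓ * ℓ + a % ℓ : ℕ)) := by rw [hnat2]; congr 1; omega
        _ = z (-(M:ℤ) + (a / ℓ * ℓ + a % ℓ : ℕ)) := h1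
        _ = z j := by rw [hnat2]; congr 1; omega
    · have ht : a - q * ℓ < ℓ := by omega
      have hnat2 : q * ℓ + (a - q * ℓ) = a := Nat.add_sub_cancel' hge
      have h1 := congrFun (congrArg Prod.snd hxe) ⟨a - q * ℓ, ht⟩
      calc x j = x (-(M:ℤ) + (q * ℓ + (a - q * ℓ) : ℕ)) := by rw [hnat2]; congr 1; omega
        _ = z (-(M:ℤ) + (q * ℓ + (a - q * ℓ) : ℕ)) := h1
        _ = z j := by rw [hnat2]; congr 1; omega
  · -- cardinality
    apply Finset.card_image_le.trans
    rw [Finset.card_univ, Fintype.card_prod, Fintype.card_fun, Fintype.card_fun,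
      Fintype.card_fin, Fintype.card_fin, Fintype.card_fin]
    have h2 : Fintype.card {v : Fin ℓ → Fin K // v ≠ b} = K ^ ℓ - 1 := by
      have h3 := Fintype.card_subtype_compl (fun v : Fin ℓ → Fin K => v = b)
      simpa [Fintype.card_subtype_eq, Fintype.card_fun] using h3
    rw [h2]

lemma entE_bound (hK : 2 ≤ K) (F : Set (ℤ → Fin K)) (hFinv : MapsTo shift F F)
    (L : ℕ) (y : ℤ → Fin K)
    (hP : ∀ x ∈ F, ∀ m : ℤ, ∃ i : ℤ, i.natAbs ≤ (L:ℤ) ∧ x (m + i) ≠ y i)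
    (M : ℕ) :
    coverEntropyEntourage shift F (VM K M) ≤
      (((Real.log ((K ^ (2*L+1) - 1 : ℕ) : ℝ) / ((2*L+1 : ℕ) : ℝ) + Real.log K) / 2 : ℝ) : EReal) := by
  set ℓ := 2*L+1 with hℓ
  have hℓpos : 0 < ℓ := by omega
  set c : ℕ := K ^ ℓ - 1 with hc
  have hKl : 2 ≤ K ^ ℓ := le_trans hK (Nat.le_self_pow (by omega) K)
  have hc1 : 1 ≤ c := by omega
  set D : ℝ := Real.log (c : ℝ) with hD
  have hD0 : 0 ≤ D := Real.log_nonneg (by exact_mod_cast hc1)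
  set A : ℝ := D / ℓ with hA
  have hlogpow : Real.log ((K ^ ℓ : ℕ) : ℝ) = ℓ * Real.log K := by
    rw [Nat.cast_pow, Real.log_pow]
  have hAlt : A < Real.log K := by
    have h1 : Real.log (c : ℝ) < Real.log ((K ^ ℓ : ℕ) : ℝ) := by
      apply Real.log_lt_log (by exact_mod_cast hc1)
      exact_mod_cast (by omega : c < K ^ ℓ)
    rw [hA, div_lt_iff₀ (by positivity)]
    calc D < ℓ * Real.log K := by rw [← hlogpow]; exact h1
      _ = Real.log K * ℓ := by ring
  set B : ℝ := (A + Real.log K) / 2 with hB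
  have hAB : A < B := by rw [hB]; linarith
  set C : ℝ := 2*M*D/ℓ + ℓ * Real.log K with hC
  have hlogK0 : 0 ≤ Real.log K := Real.log_nonneg (by exact_mod_cast (by omega : 1 ≤ K))
  have hC0 : 0 ≤ C := by positivity
  obtain ⟨n₀, hn₀⟩ := exists_nat_gt (C / (B - A))
  set n := n₀ + 1 with hn
  have hnpos : 0 < n := Nat.succ_pos _
  have hngt : C / (B - A) < (n : ℝ) := hn₀.trans_le (by exact_mod_cast Nat.le_succ n₀)
  have hkey : C ≤ (n : ℝ) * (B - A) := le_of_lt ((div_lt_iff₀ (by linarith)).1 hngt)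
  obtain ⟨s, hs, hcard⟩ := cover_exists hK F L y hP M n
  have h1 := (haveI := VM_symm (K := K) M; hs.coverEntropyEntourage_le_log_card_div hFinv hnpos.ne')
  rw [VM_comp] at h1
  set cn : ℕ := c ^ ((n + 2*M) / ℓ) * K ^ ℓ with hcn
  have hcn1 : 1 ≤ cn := Nat.one_le_iff_ne_zero.2 (by positivity)
  have h2 : ENNReal.log (s.card : ℝ≥0∞) ≤ ENNReal.log (cn : ℝ≥0∞) :=
    ENNReal.log_monotone (by exact_mod_cast hcard)
  have h3 : coverEntropyEntourage shift F (VM K M) ≤ ENNReal.log (cn : ℝ≥0∞) / (n : EReal) :=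
    h1.trans (EReal.monotone_div_right_of_nonneg (by exact_mod_cast Nat.zero_le n) h2)
  apply h3.trans
  have htoReal : ((cn : ℝ≥0∞)).toReal = (cn : ℝ) := ENNReal.toReal_natCast cn
  have h4 : ENNReal.log (cn : ℝ≥0∞) = ((Real.log (cn : ℝ) : ℝ) : EReal) := by
    rw [ENNReal.log_pos_real' (by rw [htoReal]; exact_mod_cast Nat.lt_of_lt_of_le Nat.zero_lt_one hcn1), htoReal]
  rw [h4, EReal.div_le_iff_le_mul (by exact_mod_cast hnpos) (EReal.natCast_ne_top n)]
  have h5 : ((n : ℕ) : EReal) * ((B : ℝ) : EReal) = ((((n:ℝ) * B : ℝ)) : EReal) := by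
    rw [← EReal.coe_coe_eq_natCast, ← EReal.coe_mul]
  rw [h5, EReal.coe_le_coe_iff]
  set q := (n + 2*M) / ℓ with hq
  have hq_le : (q : ℝ) ≤ ((n : ℝ) + 2*M) / (ℓ : ℝ) := by
    have := Nat.cast_div_le (α := ℝ) (m := n + 2*M) (n := ℓ)
    rw [hq]
    push_cast at this ⊢
    exact this
  have hlog : Real.log (cn : ℝ) = (q : ℝ) * D + ℓ * Real.log K := by
    rw [hcn]
    push_cast
    rw [Real.log_mul (by positivity) (by positivity), Real.log_pow, Real.log_pow]
  rw [hlog]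
  have step1 : (q : ℝ) * D + ℓ * Real.log K ≤ (((n : ℝ) + 2*M) / ℓ) * D + ℓ * Real.log K := by
    gcongr
  apply step1.trans
  have step2 : (((n : ℝ) + 2*M) / ℓ) * D + ℓ * Real.log K = (n : ℝ) * A + C := by
    rw [hA, hC]
    field_simp
    ring
  rw [step2]
  nlinarith [hkey]


end S17

namespace S17

def uY (K : ℕ) : UniformSpace (ℤ → Fin K) := @Pi.uniformSpace ℤ (fun _ => Fin K) (fun _ => ⊥)

lemma exists_VM_subset {K : ℕ} {U : Set ((ℤ → Fin K) × (ℤ → Fin K))}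
    (hU : U ∈ @uniformity _ (uY K)) : ∃ M : ℕ, VM K M ⊆ U := by
  have hpi : @uniformity _ (uY K) = ⨅ i : ℤ,
      Filter.comap (fun p : (ℤ → Fin K) × (ℤ → Fin K) => (p.1 i, p.2 i))
        (@uniformity (Fin K) ⊥) := @Pi.uniformity ℤ (fun _ => Fin K) (fun _ => ⊥)
  rw [hpi, Filter.mem_iInf'] at hU
  obtain ⟨I, hIfin, V, hV, -, hUeq, -⟩ := hU
  have key : ∀ i : ℤ, {p : (ℤ → Fin K) × (ℤ → Fin K) | p.1 i = p.2 i} ⊆ V i := by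
    intro i
    obtain ⟨t, ht, hsub⟩ := Filter.mem_comap.1 (hV i)
    have hid : SetRel.id ⊆ t := Filter.mem_principal.1 ht
    intro p hp
    exact hsub (hid (SetRel.mem_id.2 hp))
  refine ⟨hIfin.toFinset.sup fun i => i.natAbs, fun p hp => ?_⟩
  rw [hUeq]
  refine Set.mem_iInter₂.2 fun i hi => key i (hp i ?_)
  exact Finset.le_sup (hIfin.mem_toFinset.2 hi)

end S17


end S17aux

/-- (Appendix) If `h_top(T) = log K` and `ψ : X → {1,…,K}^ℤ` is a
continuous injective equivariant map, then `ψ` is onto, hence a topological conjugacy with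
the `K`-full shift. -/
theorem statement_17 {X : Type*} [MetricSpace X] [CompactSpace X]
    (K : ℕ) (T : X ≃ₜ X)
    (htop : Dynamics.coverEntropy ⇑T Set.univ = (Real.log K : EReal))
    (ψ : X → ℤ → Fin K) (hcont : Continuous ψ) (hinj : Function.Injective ψ)
    (hequiv : ∀ x, ψ (T x) = shift (ψ x)) :
    Function.Surjective ψ ∧ IsHomeomorph ψ := by
  classical
  have hXne : Nonempty X := by
    by_contra hX
    rw [not_nonempty_iff] at hX
    rw [Set.univ_eq_empty_iff.2 hX, Dynamics.coverEntropy_empty] at htop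
    exact (EReal.bot_lt_coe _).ne htop
  suffices hsurj : Function.Surjective ψ by
    exact ⟨hsurj, isHomeomorph_iff_continuous_bijective.2 ⟨hcont, hinj, hsurj⟩⟩
  rcases lt_or_ge K 2 with hK | hK
  · interval_cases K
    · exact (ψ (Classical.arbitrary X) 0).elim0
    · exact fun z => ⟨Classical.arbitrary X, funext fun i => Subsingleton.elim _ _⟩
  -- main case : K ≥ 2
  letI uy : UniformSpace (ℤ → Fin K) := S17.uY K
  have hsemi : Function.Semiconj ψ ⇑T Krieger.shift := hequiv
  have hcompat : uy.toTopologicalSpace = (inferInstance : TopologicalSpace (ℤ → Fin K)) := by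
    show @Pi.topologicalSpace ℤ (fun _ => Fin K)
        (fun _ => (⊥ : UniformSpace (Fin K)).toTopologicalSpace)
      = @Pi.topologicalSpace ℤ (fun _ => Fin K) (fun _ => inferInstance)
    exact congrArg _ (funext fun _ => (DiscreteTopology.eq_bot (α := Fin K)).symm)
  have hemb : IsEmbedding ψ := (hcont.isClosedEmbedding hinj).toIsEmbedding
  have hcomap : (inferInstance : UniformSpace X) = uy.comap ψ := by
    refine unique_uniformity_of_compact rfl ?_
    rw [UniformSpace.toTopologicalSpace_comap, hcompat]
    exact hemb.eq_induced.symm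
  have hF : @Dynamics.coverEntropy _ uy Krieger.shift (Set.range ψ)
      = ((Real.log K : ℝ) : EReal) := by
    have h0 := Dynamics.coverEntropy_image_of_comap uy hsemi Set.univ
    rw [Set.image_univ] at h0
    rw [h0, ← hcomap]
    exact htop
  by_contra hns
  obtain ⟨y, hy⟩ := not_forall.1 hns
  set F := Set.range ψ with hFdef
  have hFcl : IsClosed F := (isCompact_range hcont).isClosed
  have hyF : y ∈ Fᶜ := fun h => hy h
  obtain ⟨I, u, hu1, hu2⟩ := isOpen_pi_iff.1 hFcl.isOpen_compl y hyF
  set L : ℕ := I.sup fun i => i.natAbs with hL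
  have hsep : ∀ z ∈ F, ∃ i ∈ I, z i ≠ y i := by
    intro z hz
    by_contra hcon
    push_neg at hcon
    have hzpi : z ∈ (I : Set ℤ).pi u := fun i hi => by
      rw [hcon i hi]; exact (hu1 i hi).2
    exact (hu2 hzpi) hz
  have key : ∀ (x : X) (m : ℤ), ∃ x' : X, ∀ j : ℤ, ψ x' j = ψ x (m + j) := by
    intro x m
    induction m using Int.induction_on with
    | zero => exact ⟨x, fun j => by rw [zero_add]⟩
    | succ i ih =>
      obtain ⟨x', hx'⟩ := ih
      refine ⟨T x', fun j => ?_⟩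
      rw [hequiv x']
      show ψ x' (j + 1) = _
      rw [hx' (j + 1)]
      congr 1
      ring
    | pred i ih =>
      obtain ⟨x', hx'⟩ := ih
      refine ⟨T.symm x', fun j => ?_⟩
      have h1 : ψ x' = shift (ψ (T.symm x')) := by
        rw [← hequiv (T.symm x'), T.apply_symm_apply]
      calc ψ (T.symm x') j = ψ (T.symm x') (j - 1 + 1) := by congr 1; ring
        _ = shift (ψ (T.symm x')) (j - 1) := rfl
        _ = ψ x' (j - 1) := by rw [← h1]
        _ = ψ x (-(i:ℤ) + (j - 1)) := hx' (j - 1)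
        _ = ψ x (-(i:ℤ) - 1 + j) := by congr 1; ring
  have hP : ∀ z ∈ F, ∀ m : ℤ, ∃ i : ℤ, i.natAbs ≤ (L:ℤ) ∧ z (m + i) ≠ y i := by
    rintro z ⟨x, rfl⟩ m
    obtain ⟨x', hx'⟩ := key x m
    obtain ⟨i, hiI, hne⟩ := hsep (ψ x') ⟨x', rfl⟩
    rw [hx' i] at hne
    exact ⟨i, by exact_mod_cast Finset.le_sup (f := fun i : ℤ => i.natAbs) hiI, hne⟩
  have hFinv : Set.MapsTo shift F F := by
    rintro _ ⟨x, rfl⟩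
    exact ⟨T x, hequiv x⟩
  set Breal : ℝ :=
    (Real.log ((K ^ (2*L+1) - 1 : ℕ) : ℝ) / ((2*L+1 : ℕ) : ℝ) + Real.log K) / 2 with hBr
  have hle : @Dynamics.coverEntropy _ uy shift F ≤ (Breal : EReal) := by
    refine iSup₂_le fun U hU => ?_
    obtain ⟨M, hM⟩ := S17.exists_VM_subset hU
    exact (Dynamics.coverEntropyEntourage_antitone shift F hM).trans
      (S17.entE_bound hK F hFinv L y hP M)
  rw [hF] at hle
  rw [EReal.coe_le_coe_iff] at hle
  have hKl : 2 ≤ K ^ (2*L+1) := le_trans hK (Nat.le_self_pow (by omega) K)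
  have h1 : Real.log ((K ^ (2*L+1) - 1 : ℕ) : ℝ) < Real.log ((K ^ (2*L+1) : ℕ) : ℝ) := by
    apply Real.log_lt_log (by exact_mod_cast (by omega : 1 ≤ K ^ (2*L+1) - 1))
    exact_mod_cast (by omega : K ^ (2*L+1) - 1 < K ^ (2*L+1))
  have h2 : Real.log ((K ^ (2*L+1) : ℕ) : ℝ) = ((2*L+1 : ℕ) : ℝ) * Real.log K := by
    rw [Nat.cast_pow, Real.log_pow]
  have h3 : Real.log ((K ^ (2*L+1) - 1 : ℕ) : ℝ) / ((2*L+1 : ℕ) : ℝ) < Real.log K := by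
    rw [div_lt_iff₀ (by positivity)]
    calc Real.log ((K ^ (2*L+1) - 1 : ℕ) : ℝ) < ((2*L+1 : ℕ) : ℝ) * Real.log K := by
          rw [← h2]; exact h1
      _ = Real.log K * ((2*L+1 : ℕ) : ℝ) := by ring
  have : Breal < Real.log K := by rw [hBr]; linarith
  linarith
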